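/- arXiv:2105.15013 — 4 statements merged into one kernel-verified Lean document; each statement's English description precedes it below -/
import Mathlib

section
/- For a supermodular characteristic function v on a nonempty finite set of agents N with v(∅) = 0, the Shapley value lies in the core: for every coalition C ⊆ N, ∑_{i ∈ C} φ_i(v) ≥ v(C). -/
open Finset

/-- The Shapley value of agent `i` for a characteristic function `v` on the
finite set of agents `N` (taken to be all of the type `N`):
`φ_i(v) = ∑_{C ⊆ N \ {i}} (|C|!·(n−|C|−1)!/n!)·(v(C ∪ {i}) − v(C))`. -/
noncomputable def shapleyValue {N : Type*} [Fintype N] [DecidableEq N]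
    (v : Finset N → ℝ) (i : N) : ℝ :=
  ∑ C ∈ ((Finset.univ : Finset N).erase i).powerset,
    ((Nat.factorial C.card * Nat.factorial (Fintype.card N - C.card - 1) : ℝ) /
      (Nat.factorial (Fintype.card N))) * (v (insert i C) - v C)


section Split

variable {α β : Type*} (p : α → Prop) (q : β → Prop) [DecidablePred p] [DecidablePred q]

/-- An equivalence carrying `p` to `q` splits into equivalences of the subtypes
and their complements. -/
def splitEquiv :
    { e : α ≃ β // ∀ a, p a ↔ q (e a) } ≃
      (({ a // p a } ≃ { b // q b }) × ({ a // ¬ p a } ≃ { b // ¬ q b })) where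
  toFun e := ⟨e.1.subtypeEquiv e.2, e.1.subtypeEquiv fun a => not_congr (e.2 a)⟩
  invFun fg :=
    ⟨(Equiv.sumCompl p).symm.trans ((Equiv.sumCongr fg.1 fg.2).trans (Equiv.sumCompl q)), by
      intro a
      by_cases h : p a
      · simp only [Equiv.trans_apply, Equiv.sumCompl_symm_apply_of_pos h,
          Equiv.sumCongr_apply, Sum.map_inl, Equiv.sumCompl_apply_inl]
        exact iff_of_true h (fg.1 ⟨a, h⟩).2
      · simp only [Equiv.trans_apply, Equiv.sumCompl_symm_apply_of_neg h,
          Equiv.sumCongr_apply, Sum.map_inr, Equiv.sumCompl_apply_inr]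
        exact iff_of_false h (fg.2 ⟨a, h⟩).2⟩
  left_inv e := by
    apply Subtype.ext
    apply Equiv.ext
    intro a
    by_cases h : p a
    · simp [Equiv.sumCompl_symm_apply_of_pos h]
    · simp [Equiv.sumCompl_symm_apply_of_neg h]
  right_inv fg := by
    refine Prod.ext ?_ ?_
    · apply Equiv.ext
      intro x
      apply Subtype.ext
      simp [Equiv.sumCompl_symm_apply_of_pos x.2]
    · apply Equiv.ext
      intro x
      apply Subtype.ext
      simp [Equiv.sumCompl_symm_apply_of_neg x.2]


lemma splitEquiv_symm_apply_coe (fg : ({ a // p a } ≃ { b // q b }) × ({ a // ¬ p a } ≃ { b // ¬ q b })) :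
    (((splitEquiv p q).symm fg : { e : α ≃ β // ∀ a, p a ↔ q (e a) }) : α ≃ β)
      = (Equiv.sumCompl p).symm.trans ((Equiv.sumCongr fg.1 fg.2).trans (Equiv.sumCompl q)) :=
  rfl

end Split

/-- Pull a condition on the second component of a product out. -/
def prodSubtypeSnd {F G : Type*} (P : G → Prop) :
    { y : F × G // P y.2 } ≃ F × { g : G // P g } where
  toFun y := (y.1.1, ⟨y.1.2, y.2⟩)
  invFun z := ⟨(z.1, z.2.1), z.2.2⟩
  left_inv y := rfl
  right_inv z := rfl

lemma card_fin_val_lt (n c : ℕ) (hcn : c ≤ n) :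
    Fintype.card { j : Fin n // (j : ℕ) < c } = c := by
  have e : { j : Fin n // (j : ℕ) < c } ≃ Fin c :=
    { toFun := fun x => ⟨x.1, x.2⟩
      invFun := fun j => ⟨⟨j, j.2.trans_le hcn⟩, j.2⟩
      left_inv := fun x => by ext; rfl
      right_inv := fun j => rfl }
  rw [Fintype.card_congr e, Fintype.card_fin]

section Shapley

variable {N : Type*} [Fintype N] [DecidableEq N]

/-- The set of predecessors of `i` in the ordering `σ`. -/
def predSet (σ : Fin (Fintype.card N) ≃ N) (i : N) : Finset N :=
  (Finset.Iio (σ.symm i)).map σ.toEmbedding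

lemma mem_predSet {σ : Fin (Fintype.card N) ≃ N} {i a : N} :
    a ∈ predSet σ i ↔ σ.symm a < σ.symm i := by
  simp [predSet, Finset.mem_map_equiv]

lemma not_mem_predSet_self (σ : Fin (Fintype.card N) ≃ N) (i : N) :
    i ∉ predSet σ i := by simp [mem_predSet]

lemma predSet_card (σ : Fin (Fintype.card N) ≃ N) (i : N) :
    (predSet σ i).card = (σ.symm i : ℕ) := by
  rw [predSet, Finset.card_map, Fin.card_Iio]

lemma marginal_core (v : Finset N → ℝ) (h0 : v ∅ = 0)
    (hsup : ∀ A B : Finset N, v A + v B ≤ v (A ∪ B) + v (A ∩ B))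
    (σ : Fin (Fintype.card N) ≃ N) :
    ∀ C : Finset N, v C ≤ ∑ i ∈ C, (v (insert i (predSet σ i)) - v (predSet σ i)) := by
  intro C
  induction C using Finset.strongInduction with
  | _ C ih =>
    rcases C.eq_empty_or_nonempty with rfl | hC
    · simp [h0]
    · have hne : (C.image σ.symm).Nonempty := hC.image _
      set m := (C.image σ.symm).max' hne with hm
      set i := σ m with hi
      have hmem : i ∈ C := by
        obtain ⟨a, ha, hae⟩ := Finset.mem_image.1 ((C.image σ.symm).max'_mem hne)
        rwa [hi, hm, ← hae, Equiv.apply_symm_apply]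
      have hsymm : σ.symm i = m := by rw [hi, Equiv.symm_apply_apply]
      have hlt : ∀ a ∈ C, a ≠ i → σ.symm a < m := by
        intro a ha hne'
        refine lt_of_le_of_ne (Finset.le_max' _ _ (Finset.mem_image_of_mem _ ha)) fun h => hne' ?_
        rw [hi, ← h, Equiv.apply_symm_apply]
      set B := predSet σ i with hB
      have hiB : i ∉ B := not_mem_predSet_self σ i
      have hEr : C.erase i ⊆ B := by
        intro a ha
        obtain ⟨hne', ha'⟩ := Finset.mem_erase.1 ha
        exact mem_predSet.2 (hsymm ▸ hlt a ha' hne')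
      have hU : C ∪ B = insert i B := by
        apply Finset.Subset.antisymm
        · refine Finset.union_subset (fun a ha => ?_) (Finset.subset_insert _ _)
          by_cases h : a = i
          · exact h ▸ Finset.mem_insert_self _ _
          · exact Finset.mem_insert_of_mem (hEr (Finset.mem_erase.2 ⟨h, ha⟩))
        · exact Finset.insert_subset (Finset.mem_union_left _ hmem) Finset.subset_union_right
      have hI : C ∩ B = C.erase i := by
        ext a
        simp only [Finset.mem_inter, Finset.mem_erase]
        constructor
        · rintro ⟨h1, h2⟩
          exact ⟨fun h => hiB (h ▸ h2), h1⟩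
        · rintro ⟨h1, h2⟩
          exact ⟨h2, hEr (Finset.mem_erase.2 ⟨h1, h2⟩)⟩
      have key := hsup C B
      rw [hU, hI] at key
      have ihe := ih (C.erase i) (Finset.erase_ssubset hmem)
      have hsum := Finset.sum_erase_add C
        (fun j => v (insert j (predSet σ j)) - v (predSet σ j)) hmem
      simp only [← hB] at hsum
      linarith

lemma predSet_eq_iff (σ : Fin (Fintype.card N) ≃ N) (i : N) (C : Finset N)
    (hc : C.card < Fintype.card N) :
    predSet σ i = C ↔
      (∀ j : Fin (Fintype.card N), ((j : ℕ) < C.card ↔ σ j ∈ C)) ∧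
        σ ⟨C.card, hc⟩ = i := by
  constructor
  · intro h
    have hcard : (σ.symm i : ℕ) = C.card := by rw [← predSet_card σ i, h]
    have hse : σ.symm i = ⟨C.card, hc⟩ := Fin.ext hcard
    refine ⟨fun j => ?_, ?_⟩
    · have h3 : σ j ∈ predSet σ i ↔ σ.symm (σ j) < σ.symm i := mem_predSet
      rw [h, Equiv.symm_apply_apply, hse] at h3
      exact Iff.symm (h3.trans (by rw [Fin.lt_def]))
    · rw [← hse, Equiv.apply_symm_apply]
  · rintro ⟨h1, h2⟩
    have hse : σ.symm i = ⟨C.card, hc⟩ := by rw [← h2, Equiv.symm_apply_apply]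
    ext a
    have h3 := h1 (σ.symm a)
    rw [Equiv.apply_symm_apply] at h3
    rw [mem_predSet, hse, Fin.lt_def, ← h3]

lemma fiber_card [Nonempty N] (i : N) (C : Finset N) (hiC : i ∉ C)
    (hc : C.card < Fintype.card N) :
    (Finset.univ.filter fun σ : Fin (Fintype.card N) ≃ N => predSet σ i = C).card
      = C.card.factorial * (Fintype.card N - C.card - 1).factorial := by
  classical
  rw [← Fintype.card_subtype]
  set a0 : {j : Fin (Fintype.card N) // ¬ (j : ℕ) < C.card} :=
    ⟨⟨C.card, hc⟩, lt_irrefl C.card⟩ with ha0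
  set b0 : {a : N // ¬ a ∈ C} := ⟨i, hiC⟩ with hb0
  have e1 : {σ : Fin (Fintype.card N) ≃ N // predSet σ i = C} ≃
      {σ : Fin (Fintype.card N) ≃ N //
        (∀ j : Fin (Fintype.card N), ((j : ℕ) < C.card ↔ σ j ∈ C)) ∧ σ ⟨C.card, hc⟩ = i} :=
    Equiv.subtypeEquivRight fun σ => predSet_eq_iff σ i C hc
  have e2 : {σ : Fin (Fintype.card N) ≃ N //
        (∀ j : Fin (Fintype.card N), ((j : ℕ) < C.card ↔ σ j ∈ C)) ∧ σ ⟨C.card, hc⟩ = i} ≃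
      {x : {σ : Fin (Fintype.card N) ≃ N //
          ∀ j : Fin (Fintype.card N), ((j : ℕ) < C.card ↔ σ j ∈ C)} // x.1 ⟨C.card, hc⟩ = i} :=
    (Equiv.subtypeSubtypeEquivSubtypeInter _ _).symm
  have e3 := Equiv.subtypeEquivOfSubtype'
    (p := fun x : {σ : Fin (Fintype.card N) ≃ N //
        ∀ j : Fin (Fintype.card N), ((j : ℕ) < C.card ↔ σ j ∈ C)} => x.1 ⟨C.card, hc⟩ = i)
    (splitEquiv (fun j : Fin (Fintype.card N) => (j : ℕ) < C.card) (fun a : N => a ∈ C))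
  have e4 : {y : ({j : Fin (Fintype.card N) // (j : ℕ) < C.card} ≃ {a : N // a ∈ C}) ×
        ({j : Fin (Fintype.card N) // ¬ (j : ℕ) < C.card} ≃ {a : N // ¬ a ∈ C}) //
        (((splitEquiv (fun j : Fin (Fintype.card N) => (j : ℕ) < C.card)
            (fun a : N => a ∈ C)).symm y : _) : Fin (Fintype.card N) ≃ N) ⟨C.card, hc⟩ = i} ≃
      {y : ({j : Fin (Fintype.card N) // (j : ℕ) < C.card} ≃ {a : N // a ∈ C}) ×
        ({j : Fin (Fintype.card N) // ¬ (j : ℕ) < C.card} ≃ {a : N // ¬ a ∈ C}) //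
        y.2 a0 = b0} := by
    apply Equiv.subtypeEquivRight
    rintro ⟨f, g⟩
    have hv : ((((splitEquiv (fun j : Fin (Fintype.card N) => (j : ℕ) < C.card)
          (fun a : N => a ∈ C)).symm (f, g) : _)) : Fin (Fintype.card N) ≃ N) ⟨C.card, hc⟩
        = ((g a0 : {a : N // ¬ a ∈ C}) : N) := by
      rw [splitEquiv_symm_apply_coe]
      rw [Equiv.trans_apply, Equiv.sumCompl_symm_apply_of_neg
        (p := fun j : Fin (Fintype.card N) => (j : ℕ) < C.card) (a := ⟨C.card, hc⟩) a0.2]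
      rfl
    rw [hv]
    exact ⟨fun h => Subtype.ext h, fun h => congrArg Subtype.val h⟩
  have e5 := prodSubtypeSnd
    (F := {j : Fin (Fintype.card N) // (j : ℕ) < C.card} ≃ {a : N // a ∈ C})
    (fun g : {j : Fin (Fintype.card N) // ¬ (j : ℕ) < C.card} ≃ {a : N // ¬ a ∈ C} =>
      g a0 = b0)
  have e6iff : ∀ g : {j : Fin (Fintype.card N) // ¬ (j : ℕ) < C.card} ≃ {a : N // ¬ a ∈ C},
      (g a0 = b0 ↔ ∀ x, (x = a0 ↔ g x = b0)) := fun g =>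
    ⟨fun h x => ⟨fun hx => hx ▸ h, fun hx => g.injective (hx.trans h.symm)⟩,
      fun h => (h a0).1 rfl⟩
  have e6 := Equiv.subtypeEquivRight e6iff
  have e7 := splitEquiv (fun x : {j : Fin (Fintype.card N) // ¬ (j : ℕ) < C.card} => x = a0)
    (fun y : {a : N // ¬ a ∈ C} => y = b0)
  have big := ((((e1.trans e2).trans e3).trans e4).trans e5).trans
    (Equiv.prodCongr (Equiv.refl _) (e6.trans e7))
  rw [Fintype.card_congr big, Fintype.card_prod, Fintype.card_prod]
  have h1 : Fintype.card {j : Fin (Fintype.card N) // (j : ℕ) < C.card} = C.card :=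
    card_fin_val_lt _ _ hc.le
  have h2 : Fintype.card {a : N // a ∈ C} = C.card := Fintype.card_coe C
  have h3 : Fintype.card {j : Fin (Fintype.card N) // ¬ (j : ℕ) < C.card}
      = Fintype.card N - C.card := by
    rw [Fintype.card_subtype_compl, Fintype.card_fin, h1]
  have h4 : Fintype.card {a : N // ¬ a ∈ C} = Fintype.card N - C.card := by
    rw [Fintype.card_subtype_compl, h2]
  have h5 : Fintype.card {x : {j : Fin (Fintype.card N) // ¬ (j : ℕ) < C.card} // x = a0} = 1 :=
    Fintype.card_subtype_eq a0
  have h6 : Fintype.card {y : {a : N // ¬ a ∈ C} // y = b0} = 1 :=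
    Fintype.card_subtype_eq b0
  have h7 : Fintype.card {x : {j : Fin (Fintype.card N) // ¬ (j : ℕ) < C.card} // ¬ x = a0}
      = Fintype.card N - C.card - 1 := by
    rw [Fintype.card_subtype_compl, h3, h5]
  have h8 : Fintype.card {y : {a : N // ¬ a ∈ C} // ¬ y = b0}
      = Fintype.card N - C.card - 1 := by
    rw [Fintype.card_subtype_compl, h4, h6]
  rw [Fintype.card_equiv (Fintype.equivOfCardEq (h1.trans h2.symm)), h1]
  rw [Fintype.card_equiv (Fintype.equivOfCardEq (h5.trans h6.symm)), h5]
  rw [Fintype.card_equiv (Fintype.equivOfCardEq (h7.trans h8.symm)), h7]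
  rw [Nat.factorial_one, one_mul]

lemma shapley_perm [Nonempty N] (v : Finset N → ℝ) (i : N) :
    ((Fintype.card N).factorial : ℝ) * shapleyValue v i
      = ∑ σ : Fin (Fintype.card N) ≃ N,
          (v (insert i (predSet σ i)) - v (predSet σ i)) := by
  classical
  have hmaps : ∀ σ ∈ (Finset.univ : Finset (Fin (Fintype.card N) ≃ N)),
      predSet σ i ∈ (Finset.univ.erase i).powerset := by
    intro σ _
    rw [Finset.mem_powerset]
    intro a ha
    refine Finset.mem_erase.2 ⟨fun h => ?_, Finset.mem_univ a⟩
    exact not_mem_predSet_self σ i (h ▸ ha)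
  rw [← Finset.sum_fiberwise_of_maps_to hmaps
    (fun σ => v (insert i (predSet σ i)) - v (predSet σ i))]
  rw [shapleyValue, Finset.mul_sum]
  refine Finset.sum_congr rfl fun C hC => ?_
  have hiC : i ∉ C := fun h => (Finset.mem_erase.1 (Finset.mem_powerset.1 hC h)).1 rfl
  have hclt : C.card < Fintype.card N := by
    have hle := Finset.card_le_card (Finset.mem_powerset.1 hC)
    have h1 : (Finset.univ.erase i).card = Fintype.card N - 1 := by
      rw [Finset.card_erase_of_mem (Finset.mem_univ i), Finset.card_univ]
    have hpos : 0 < Fintype.card N := Fintype.card_pos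
    omega
  have hconst : ∀ σ ∈ Finset.univ.filter
      (fun σ : Fin (Fintype.card N) ≃ N => predSet σ i = C),
      (v (insert i (predSet σ i)) - v (predSet σ i)) = v (insert i C) - v C := fun σ hσ => by
    rw [(Finset.mem_filter.1 hσ).2]
  rw [Finset.sum_congr rfl hconst, Finset.sum_const, fiber_card i C hiC hclt, nsmul_eq_mul]
  have hne : ((Fintype.card N).factorial : ℝ) ≠ 0 :=
    Nat.cast_ne_zero.2 (Nat.factorial_ne_zero _)
  push_cast
  field_simp

end Shapley

/-- For a supermodular characteristic function `v` with `v ∅ = 0` on a nonempty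
finite set of agents, the Shapley value lies in the core:
for every coalition `C`, `∑_{i ∈ C} φ_i(v) ≥ v(C)`. -/
theorem shapleyValue_mem_core {N : Type*} [Fintype N] [DecidableEq N] [Nonempty N]
    (v : Finset N → ℝ) (h0 : v ∅ = 0)
    (hsup : ∀ A B : Finset N, v A + v B ≤ v (A ∪ B) + v (A ∩ B)) :
    ∀ C : Finset N, v C ≤ ∑ i ∈ C, shapleyValue v i := by
  intro C
  have hfac : (0 : ℝ) < ((Fintype.card N).factorial : ℝ) := by
    exact_mod_cast (Fintype.card N).factorial_pos
  rw [← mul_le_mul_iff_right₀ hfac, Finset.mul_sum]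
  have hcard : (Finset.univ : Finset (Fin (Fintype.card N) ≃ N)).card
      = (Fintype.card N).factorial := by
    rw [Finset.card_univ, Fintype.card_equiv (Fintype.equivFin N).symm, Fintype.card_fin]
  calc ((Fintype.card N).factorial : ℝ) * v C
      = ∑ _σ : Fin (Fintype.card N) ≃ N, v C := by
        rw [Finset.sum_const, hcard, nsmul_eq_mul]
    _ ≤ ∑ σ : Fin (Fintype.card N) ≃ N,
          ∑ i ∈ C, (v (insert i (predSet σ i)) - v (predSet σ i)) :=
        Finset.sum_le_sum fun σ _ => marginal_core v h0 hsup σ C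
    _ = ∑ i ∈ C, ∑ σ : Fin (Fintype.card N) ≃ N,
          (v (insert i (predSet σ i)) - v (predSet σ i)) := Finset.sum_comm
    _ = ∑ i ∈ C, ((Fintype.card N).factorial : ℝ) * shapleyValue v i :=
        Finset.sum_congr rfl fun i _ => (shapley_perm v i).symm
end

section
/- For a supermodular characteristic function v on a nonempty finite set of agents N with v(∅) = 0, every marginal vector lies in the core: for every bijection σ : N ≃ {0,…,n−1} and every coalition C ⊆ N, ∑_{i ∈ C} x_σ(i) ≥ v(C), where x_σ(i) = v(P_σ(i) ∪ {i}) − v(P_σ(i)). -/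
/-- The predecessor coalition of agent `i` under the ordering (permutation)
`σ : N ≃ Fin n`: the set of agents that come strictly before `i`. -/
def predCoalition {N : Type*} [Fintype N] [DecidableEq N]
    (σ : N ≃ Fin (Fintype.card N)) (i : N) : Finset N :=
  Finset.univ.filter (fun j => σ j < σ i)

/-- For a supermodular characteristic function `v` with `v ∅ = 0` on a nonempty
finite set of agents, every marginal vector lies in the core: for every
bijection `σ : N ≃ {0,…,n−1}` and every coalition `C`,
`∑_{i ∈ C} (v(P_σ(i) ∪ {i}) − v(P_σ(i))) ≥ v(C)`. -/
theorem marginalVector_mem_core {N : Type*} [Fintype N] [DecidableEq N] [Nonempty N]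
    (v : Finset N → ℝ) (h0 : v ∅ = 0)
    (hsup : ∀ A B : Finset N, v A + v B ≤ v (A ∪ B) + v (A ∩ B)) :
    ∀ (σ : N ≃ Fin (Fintype.card N)) (C : Finset N),
      v C ≤ ∑ i ∈ C, (v (insert i (predCoalition σ i)) - v (predCoalition σ i)) := by
  intro σ C
  induction C using Finset.strongInduction with
  | _ C ih =>
    rcases C.eq_empty_or_nonempty with rfl | hC
    · simp [h0]
    · obtain ⟨i, hi, hmax⟩ := C.exists_max_image (fun j => σ j) hC
      set P := predCoalition σ i with hP
      have hltP : ∀ j ∈ C, j ≠ i → j ∈ P := by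
        intro j hj hne
        simp only [hP, predCoalition, Finset.mem_filter, Finset.mem_univ, true_and]
        exact lt_of_le_of_ne (hmax j hj) (fun h => hne (σ.injective h))
      have hunion : C ∪ P = insert i P := by
        apply Finset.Subset.antisymm
        · intro j hj
          rcases Finset.mem_union.mp hj with hj | hj
          · rcases eq_or_ne j i with rfl | hne
            · exact Finset.mem_insert_self _ _
            · exact Finset.mem_insert_of_mem (hltP j hj hne)
          · exact Finset.mem_insert_of_mem hj
        · intro j hj
          rcases Finset.mem_insert.mp hj with rfl | hj
          · exact Finset.mem_union_left _ hi
          · exact Finset.mem_union_right _ hj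
      have hinter : C ∩ P = C.erase i := by
        ext j
        simp only [Finset.mem_inter, Finset.mem_erase]
        constructor
        · rintro ⟨hj, hjP⟩
          refine ⟨fun h => ?_, hj⟩
          subst h
          simp [hP, predCoalition] at hjP
        · rintro ⟨hne, hj⟩
          exact ⟨hj, hltP j hj hne⟩
      have key := hsup C P
      rw [hunion, hinter] at key
      have hih := ih (C.erase i) (Finset.erase_ssubset hi)
      have hsum : ∑ j ∈ C, (v (insert j (predCoalition σ j)) - v (predCoalition σ j))
          = (v (insert i P) - v P)
            + ∑ j ∈ C.erase i, (v (insert j (predCoalition σ j)) - v (predCoalition σ j)) :=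
        (Finset.add_sum_erase _ _ hi).symm
      rw [hsum]
      linarith
end

section
/- Under the condition max_{s ∈ S} { ∑_{i ∈ N} max_{a ∈ A} w_i(s,a) } < 1/γ, the Shapley-Bellman operator Υ admits a unique fixed point Q* : N × S × A → ℝ (i.e. ΥQ* = Q*), and for every starting point Q⁰ the sequence of iterates Qᵏ⁺¹ = ΥQᵏ converges to Q* as k → ∞. -/
/-- The Shapley-Bellman operator:
`(ΥQ)_i(s,a) = w_i(s,a) · ∑_{s′} P(s′|s,a) · [R(s,a) + γ·∑_j max_{a′} Q_j(s′,a′)] − b_i(s)`. -/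
noncomputable def sbOp {N S A : Type*} [Fintype N] [Fintype S] [Fintype A] [Nonempty A]
    (P : S → A → S → ℝ) (R : S → A → ℝ) (γ : ℝ)
    (w : N → S → A → ℝ) (b : N → S → ℝ) (Q : N → S → A → ℝ) : N → S → A → ℝ :=
  fun i s a =>
    w i s a * ∑ s' : S, P s a s' *
      (R s a + γ * ∑ j : N, Finset.univ.sup' Finset.univ_nonempty (fun a' => Q j s' a'))
    - b i s


open Finset Filter

set_option linter.unusedSectionVars false

section auxSB
variable {N S A : Type*} [Fintype N] [Fintype S] [Fintype A]
  [Nonempty N] [Nonempty S] [Nonempty A]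

/-- Weighted distance used in the contraction argument. -/
noncomputable def sbD (Q Q' : N → S → A → ℝ) : ℝ :=
  Finset.univ.sup' Finset.univ_nonempty
    (fun s : S => ∑ i : N, Finset.univ.sup' Finset.univ_nonempty
      (fun a : A => |Q i s a - Q' i s a|))

lemma sbD_comm (Q Q' : N → S → A → ℝ) : sbD Q Q' = sbD Q' Q := by
  simp [sbD, abs_sub_comm]

lemma sup_abs_nonneg (Q Q' : N → S → A → ℝ) (i : N) (s : S) :
    0 ≤ Finset.univ.sup' Finset.univ_nonempty (fun a : A => |Q i s a - Q' i s a|) :=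
  le_trans (abs_nonneg _)
    (Finset.le_sup' (fun a : A => |Q i s a - Q' i s a|)
      (Finset.mem_univ (Classical.arbitrary A)))

lemma sum_sup_nonneg (Q Q' : N → S → A → ℝ) (s : S) :
    0 ≤ ∑ i : N, Finset.univ.sup' Finset.univ_nonempty
      (fun a : A => |Q i s a - Q' i s a|) :=
  Finset.sum_nonneg fun i _ => sup_abs_nonneg Q Q' i s

lemma sum_sup_le_sbD (Q Q' : N → S → A → ℝ) (s : S) :
    ∑ i : N, Finset.univ.sup' Finset.univ_nonempty
      (fun a : A => |Q i s a - Q' i s a|) ≤ sbD Q Q' :=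
  Finset.le_sup' (fun s : S => ∑ i : N, Finset.univ.sup' Finset.univ_nonempty
      (fun a : A => |Q i s a - Q' i s a|)) (Finset.mem_univ s)

lemma sbD_nonneg (Q Q' : N → S → A → ℝ) : 0 ≤ sbD Q Q' :=
  le_trans (sum_sup_nonneg Q Q' (Classical.arbitrary S)) (sum_sup_le_sbD Q Q' _)

lemma abs_le_sbD (Q Q' : N → S → A → ℝ) (i : N) (s : S) (a : A) :
    |Q i s a - Q' i s a| ≤ sbD Q Q' := by
  refine le_trans ?_ (sum_sup_le_sbD Q Q' s)
  refine le_trans (Finset.le_sup' (fun a : A => |Q i s a - Q' i s a|) (Finset.mem_univ a)) ?_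
  exact Finset.single_le_sum (f := fun i : N => Finset.univ.sup' Finset.univ_nonempty
      (fun a : A => |Q i s a - Q' i s a|))
    (fun j _ => sup_abs_nonneg Q Q' j s) (Finset.mem_univ i)

lemma abs_sup'_sub_sup'_le (f g : A → ℝ) :
    |Finset.univ.sup' Finset.univ_nonempty f - Finset.univ.sup' Finset.univ_nonempty g|
      ≤ Finset.univ.sup' Finset.univ_nonempty (fun a => |f a - g a|) := by
  rw [abs_sub_le_iff]
  constructor
  · rw [sub_le_iff_le_add]
    refine Finset.sup'_le _ _ fun a _ => ?_
    have h : f a ≤ |f a - g a| + g a := by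
      cases abs_cases (f a - g a) <;> linarith
    exact le_trans h (add_le_add
      (Finset.le_sup' (fun a => |f a - g a|) (Finset.mem_univ a))
      (Finset.le_sup' g (Finset.mem_univ a)))
  · rw [sub_le_iff_le_add]
    refine Finset.sup'_le _ _ fun a _ => ?_
    have h : g a ≤ |f a - g a| + f a := by
      cases abs_cases (f a - g a) <;> linarith
    exact le_trans h (add_le_add
      (Finset.le_sup' (fun a => |f a - g a|) (Finset.mem_univ a))
      (Finset.le_sup' f (Finset.mem_univ a)))

end auxSB

section lip
variable {N S A : Type*} [Fintype N] [Fintype S] [Fintype A]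
  [Nonempty N] [Nonempty S] [Nonempty A]
  (P : S → A → S → ℝ) (R : S → A → ℝ) (γ : ℝ)
  (w : N → S → A → ℝ) (b : N → S → ℝ)
  (hP0 : ∀ s a s', 0 ≤ P s a s') (hP1 : ∀ s a, ∑ s' : S, P s a s' = 1)
  (hγ0 : 0 < γ) (hw : ∀ i s a, 0 < w i s a)

include hP0 hP1 hγ0 hw in
lemma sbOp_abs_le (Q Q' : N → S → A → ℝ) (i : N) (s : S) (a : A) :
    |sbOp P R γ w b Q i s a - sbOp P R γ w b Q' i s a| ≤ γ * w i s a * sbD Q Q' := by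
  set SQ : S → ℝ := fun s' => ∑ j : N,
    Finset.univ.sup' Finset.univ_nonempty (fun a' => Q j s' a') with hSQ
  set SQ' : S → ℝ := fun s' => ∑ j : N,
    Finset.univ.sup' Finset.univ_nonempty (fun a' => Q' j s' a') with hSQ'
  have hdiff : sbOp P R γ w b Q i s a - sbOp P R γ w b Q' i s a
      = w i s a * ∑ s' : S, P s a s' * (γ * (SQ s' - SQ' s')) := by
    have hAB : (∑ s' : S, P s a s' * (R s a + γ * SQ s'))
        - (∑ s' : S, P s a s' * (R s a + γ * SQ' s'))
        = ∑ s' : S, P s a s' * (γ * (SQ s' - SQ' s')) := by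
      rw [← Finset.sum_sub_distrib]
      exact Finset.sum_congr rfl fun s' _ => by ring
    simp only [sbOp, ← hSQ, ← hSQ']
    calc w i s a * ∑ s' : S, P s a s' * (R s a + γ * SQ s') - b i s -
          (w i s a * ∑ s' : S, P s a s' * (R s a + γ * SQ' s') - b i s)
        = w i s a * ((∑ s' : S, P s a s' * (R s a + γ * SQ s'))
            - (∑ s' : S, P s a s' * (R s a + γ * SQ' s'))) := by ring
      _ = _ := by rw [hAB]
  have hSbound : ∀ s' : S, |SQ s' - SQ' s'| ≤ sbD Q Q' := by
    intro s'
    have h1 : |SQ s' - SQ' s'| ≤ ∑ j : N,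
        |Finset.univ.sup' Finset.univ_nonempty (fun a' => Q j s' a')
          - Finset.univ.sup' Finset.univ_nonempty (fun a' => Q' j s' a')| := by
      rw [hSQ, hSQ', ← Finset.sum_sub_distrib]
      exact Finset.abs_sum_le_sum_abs _ _
    refine le_trans h1 (le_trans (Finset.sum_le_sum fun j _ =>
      abs_sup'_sub_sup'_le (fun a' => Q j s' a') (fun a' => Q' j s' a')) ?_)
    exact sum_sup_le_sbD Q Q' s'
  rw [hdiff, abs_mul, abs_of_pos (hw i s a)]
  have key : |∑ s' : S, P s a s' * (γ * (SQ s' - SQ' s'))| ≤ γ * sbD Q Q' := by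
    refine le_trans (Finset.abs_sum_le_sum_abs _ _) ?_
    have h2 : ∀ s' : S, |P s a s' * (γ * (SQ s' - SQ' s'))|
        ≤ P s a s' * (γ * sbD Q Q') := by
      intro s'
      rw [abs_mul, abs_mul, abs_of_nonneg (hP0 s a s'), abs_of_pos hγ0]
      exact mul_le_mul_of_nonneg_left
        (mul_le_mul_of_nonneg_left (hSbound s') hγ0.le) (hP0 s a s')
    refine le_trans (Finset.sum_le_sum fun s' _ => h2 s') ?_
    rw [← Finset.sum_mul, hP1 s a, one_mul]
  nlinarith [hw i s a, key, abs_nonneg (∑ s' : S, P s a s' * (γ * (SQ s' - SQ' s')))]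

include hP0 hP1 hγ0 hw in
lemma sbD_op_le (Q Q' : N → S → A → ℝ) :
    sbD (sbOp P R γ w b Q) (sbOp P R γ w b Q')
      ≤ (γ * Finset.univ.sup' Finset.univ_nonempty
          (fun s : S => ∑ i : N, Finset.univ.sup' Finset.univ_nonempty
            (fun a : A => w i s a))) * sbD Q Q' := by
  set D := sbD Q Q' with hD
  have hD0 : 0 ≤ D := sbD_nonneg Q Q'
  set Wmax := Finset.univ.sup' Finset.univ_nonempty
      (fun s : S => ∑ i : N, Finset.univ.sup' Finset.univ_nonempty
        (fun a : A => w i s a)) with hW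
  show sbD _ _ ≤ (γ * Wmax) * D
  unfold sbD
  refine Finset.sup'_le _ _ fun s _ => ?_
  have step1 : ∀ i : N, Finset.univ.sup' Finset.univ_nonempty
      (fun a : A => |sbOp P R γ w b Q i s a - sbOp P R γ w b Q' i s a|)
      ≤ (Finset.univ.sup' Finset.univ_nonempty (fun a : A => w i s a)) * (γ * D) := by
    intro i
    refine Finset.sup'_le _ _ fun a _ => ?_
    refine le_trans (sbOp_abs_le P R γ w b hP0 hP1 hγ0 hw Q Q' i s a) ?_
    have hws : w i s a ≤ Finset.univ.sup' Finset.univ_nonempty (fun a : A => w i s a) :=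
      Finset.le_sup' (fun a : A => w i s a) (Finset.mem_univ a)
    calc γ * w i s a * sbD Q Q' = w i s a * (γ * D) := by rw [hD]; ring
      _ ≤ _ := mul_le_mul_of_nonneg_right hws (mul_nonneg hγ0.le hD0)
  calc ∑ i : N, Finset.univ.sup' Finset.univ_nonempty
        (fun a : A => |sbOp P R γ w b Q i s a - sbOp P R γ w b Q' i s a|)
      ≤ ∑ i : N, (Finset.univ.sup' Finset.univ_nonempty (fun a : A => w i s a)) * (γ * D) :=
        Finset.sum_le_sum fun i _ => step1 i
    _ = (∑ i : N, Finset.univ.sup' Finset.univ_nonempty (fun a : A => w i s a)) * (γ * D) :=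
        (Finset.sum_mul _ _ _).symm
    _ ≤ Wmax * (γ * D) := by
        refine mul_le_mul_of_nonneg_right ?_ (mul_nonneg (le_of_lt hγ0) hD0)
        exact Finset.le_sup' (fun s : S => ∑ i : N, Finset.univ.sup' Finset.univ_nonempty
          (fun a : A => w i s a)) (Finset.mem_univ s)
    _ = (γ * Wmax) * D := by ring

end lip

section lip2
variable {N S A : Type*} [Fintype N] [Fintype S] [Fintype A]
  [Nonempty N] [Nonempty S] [Nonempty A]

lemma sbD_le_totalsum (Q Q' : N → S → A → ℝ) :
    sbD Q Q' ≤ ∑ s : S, ∑ i : N, ∑ a : A, |Q i s a - Q' i s a| := by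
  unfold sbD
  refine Finset.sup'_le _ _ fun s _ => ?_
  refine le_trans (Finset.sum_le_sum (fun i (_ : i ∈ Finset.univ) =>
    Finset.sup'_le _ _ fun a _ =>
      Finset.single_le_sum (f := fun a : A => |Q i s a - Q' i s a|)
        (fun a _ => abs_nonneg _) (Finset.mem_univ a))) ?_
  exact Finset.single_le_sum (f := fun s : S => ∑ i : N, ∑ a : A, |Q i s a - Q' i s a|)
    (fun s _ => Finset.sum_nonneg fun i _ => Finset.sum_nonneg fun a _ => abs_nonneg _)
    (Finset.mem_univ s)

end lip2

/-- Under the condition `max_s { ∑_i max_a w_i(s,a) } < 1/γ`, the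
Shapley-Bellman operator admits a unique fixed point `Q*`, and from any
starting point `Q⁰` the iterates `Qᵏ⁺¹ = ΥQᵏ` converge to `Q*`. -/
theorem sbOp_fixed_point {N S A : Type*} [Fintype N] [Fintype S] [Fintype A]
    [Nonempty N] [Nonempty S] [Nonempty A]
    (P : S → A → S → ℝ) (R : S → A → ℝ) (γ : ℝ)
    (w : N → S → A → ℝ) (b : N → S → ℝ)
    (hP0 : ∀ s a s', 0 ≤ P s a s') (hP1 : ∀ s a, ∑ s' : S, P s a s' = 1)
    (hγ0 : 0 < γ) (hγ1 : γ < 1)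
    (hw : ∀ i s a, 0 < w i s a) (hb : ∀ i s, 0 ≤ b i s)
    (hcond : Finset.univ.sup' Finset.univ_nonempty
        (fun s : S => ∑ i : N, Finset.univ.sup' Finset.univ_nonempty (fun a : A => w i s a))
      < 1 / γ) :
    ∃ Qstar : N → S → A → ℝ,
      sbOp P R γ w b Qstar = Qstar ∧
      (∀ Q' : N → S → A → ℝ, sbOp P R γ w b Q' = Q' → Q' = Qstar) ∧
      (∀ (Q0 : N → S → A → ℝ) (i : N) (s : S) (a : A),
        Filter.Tendsto (fun k : ℕ => (sbOp P R γ w b)^[k] Q0 i s a)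
          Filter.atTop (nhds (Qstar i s a))) := by


  classical
  set T := sbOp P R γ w b with hT
  set Wmax := Finset.univ.sup' Finset.univ_nonempty
      (fun s : S => ∑ i : N, Finset.univ.sup' Finset.univ_nonempty
        (fun a : A => w i s a)) with hWmax
  set K := γ * Wmax with hK
  have hKD : ∀ Q Q' : N → S → A → ℝ, sbD (T Q) (T Q') ≤ K * sbD Q Q' :=
    fun Q Q' => sbD_op_le P R γ w b hP0 hP1 hγ0 hw Q Q'
  have hW0 : 0 < Wmax := by
    have h1 : (0:ℝ) < ∑ i : N, Finset.univ.sup' Finset.univ_nonempty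
        (fun a : A => w i (Classical.arbitrary S) a) :=
      Finset.sum_pos (fun i _ => lt_of_lt_of_le (hw i _ (Classical.arbitrary A))
        (Finset.le_sup' (fun a : A => w i (Classical.arbitrary S) a)
          (Finset.mem_univ _))) Finset.univ_nonempty
    exact lt_of_lt_of_le h1 (Finset.le_sup'
      (fun s : S => ∑ i : N, Finset.univ.sup' Finset.univ_nonempty
        (fun a : A => w i s a)) (Finset.mem_univ _))
  have hK0 : 0 ≤ K := le_of_lt (mul_pos hγ0 hW0)
  have hK1 : K < 1 := by
    have h := (mul_lt_mul_of_pos_left hcond hγ0)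
    rwa [mul_one_div, div_self (ne_of_gt hγ0)] at h
  have hiter : ∀ (Q Q' : N → S → A → ℝ) (k : ℕ),
      sbD (T^[k] Q) (T^[k] Q') ≤ K ^ k * sbD Q Q' := by
    intro Q Q' k
    induction k with
    | zero => simp
    | succ k ih =>
      rw [Function.iterate_succ_apply', Function.iterate_succ_apply']
      calc sbD (T (T^[k] Q)) (T (T^[k] Q')) ≤ K * sbD (T^[k] Q) (T^[k] Q') := hKD _ _
        _ ≤ K * (K ^ k * sbD Q Q') := mul_le_mul_of_nonneg_left ih hK0
        _ = K ^ (k + 1) * sbD Q Q' := by ring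
  set Q0 : N → S → A → ℝ := fun _ _ _ => 0 with hQ0def
  have hcau : ∀ (i : N) (s : S) (a : A),
      ∃ L : ℝ, Filter.Tendsto (fun k : ℕ => T^[k] Q0 i s a) Filter.atTop (nhds L) := by
    intro i s a
    have hc : CauchySeq (fun k : ℕ => T^[k] Q0 i s a) := by
      apply cauchySeq_of_le_geometric K (sbD Q0 (T Q0)) hK1
      intro n
      rw [Real.dist_eq]
      calc |T^[n] Q0 i s a - T^[n + 1] Q0 i s a|
          ≤ sbD (T^[n] Q0) (T^[n + 1] Q0) := abs_le_sbD _ _ i s a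
        _ = sbD (T^[n] Q0) (T^[n] (T Q0)) := by rw [Function.iterate_succ_apply]
        _ ≤ K ^ n * sbD Q0 (T Q0) := hiter _ _ n
        _ = sbD Q0 (T Q0) * K ^ n := mul_comm _ _
    exact cauchySeq_tendsto_of_complete hc
  choose Qstar hQstar using hcau
  have hcoord0 : ∀ (i : N) (s : S) (a : A),
      Filter.Tendsto (fun k : ℕ => |T^[k] Q0 i s a - Qstar i s a|) Filter.atTop (nhds 0) := by
    intro i s a
    have := ((hQstar i s a).sub_const (Qstar i s a)).abs
    simpa using this
  have hDto0 : Filter.Tendsto (fun k : ℕ => sbD (T^[k] Q0) Qstar) Filter.atTop (nhds 0) := by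
    refine squeeze_zero (fun k => sbD_nonneg _ _) (fun k => sbD_le_totalsum _ _) ?_
    have h := tendsto_finset_sum (Finset.univ : Finset S)
      (fun s _ => tendsto_finset_sum (Finset.univ : Finset N)
        (fun i _ => tendsto_finset_sum (Finset.univ : Finset A)
          (fun a _ => hcoord0 i s a)))
    simpa using h
  have hfix : T Qstar = Qstar := by
    funext i s a
    have habs : |T Qstar i s a - Qstar i s a| ≤ 0 := by
      have hlim : Filter.Tendsto (fun k : ℕ =>
          γ * w i s a * sbD Qstar (T^[k] Q0) + |T^[k + 1] Q0 i s a - Qstar i s a|)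
          Filter.atTop (nhds 0) := by
        have h1 : Filter.Tendsto (fun k : ℕ => sbD Qstar (T^[k] Q0))
            Filter.atTop (nhds 0) := by
          simpa [sbD_comm] using hDto0
        have h2 : Filter.Tendsto (fun k : ℕ => |T^[k + 1] Q0 i s a - Qstar i s a|)
            Filter.atTop (nhds 0) :=
          (hcoord0 i s a).comp (tendsto_add_atTop_nat 1)
        have := (h1.const_mul (γ * w i s a)).add h2
        simpa using this
      refine ge_of_tendsto' hlim ?_
      intro k
      have htri : |T Qstar i s a - Qstar i s a|
          ≤ |T Qstar i s a - T (T^[k] Q0) i s a| + |T (T^[k] Q0) i s a - Qstar i s a| :=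
        abs_sub_le _ _ _
      have h1 : |T Qstar i s a - T (T^[k] Q0) i s a|
          ≤ γ * w i s a * sbD Qstar (T^[k] Q0) :=
        sbOp_abs_le P R γ w b hP0 hP1 hγ0 hw Qstar (T^[k] Q0) i s a
      have h2 : T (T^[k] Q0) = T^[k + 1] Q0 := (Function.iterate_succ_apply' T k Q0).symm
      rw [h2] at htri h1
      exact le_trans htri (add_le_add h1 le_rfl)
    have h0 : |T Qstar i s a - Qstar i s a| = 0 := le_antisymm habs (abs_nonneg _)
    have := abs_eq_zero.mp h0
    linarith [sub_eq_zero.mp this]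
  have huniq : ∀ Q' : N → S → A → ℝ, T Q' = Q' → Q' = Qstar := by
    intro Q' hQ'
    have h1 : sbD Q' Qstar ≤ K * sbD Q' Qstar := by
      conv_lhs => rw [← hQ', ← hfix]
      exact hKD _ _
    have h0 : sbD Q' Qstar = 0 :=
      le_antisymm (by nlinarith [sbD_nonneg Q' Qstar]) (sbD_nonneg _ _)
    funext i s a
    have h2 := abs_le_sbD Q' Qstar i s a
    rw [h0] at h2
    have := abs_eq_zero.mp (le_antisymm h2 (abs_nonneg _))
    linarith [sub_eq_zero.mp this]
  refine ⟨Qstar, hfix, huniq, ?_⟩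
  intro Q0' i s a
  have hfixk : ∀ k : ℕ, T^[k] Qstar = Qstar := fun k => Function.iterate_fixed hfix k
  rw [tendsto_iff_dist_tendsto_zero]
  refine squeeze_zero (g := fun k : ℕ => K ^ k * sbD Q0' Qstar)
    (fun k => dist_nonneg) (fun k => ?_) ?_
  · rw [Real.dist_eq]
    calc |T^[k] Q0' i s a - Qstar i s a|
        = |T^[k] Q0' i s a - T^[k] Qstar i s a| := by rw [hfixk k]
      _ ≤ sbD (T^[k] Q0') (T^[k] Qstar) := abs_le_sbD _ _ i s a
      _ ≤ K ^ k * sbD Q0' Qstar := hiter _ _ k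
  · have := (tendsto_pow_atTop_nhds_zero_of_lt_one hK0 hK1).mul_const (sbD Q0' Qstar)
    simpa using this
end

section
/- If a global Q-function Qg : S × A → ℝ satisfies the Bellman optimality equation Qg(s,a) = ∑_{s′ ∈ S} P(s′|s,a)·[R(s,a) + γ·max_{a′ ∈ A} Qg(s′,a′)], and Q : N × S × A → ℝ satisfies, for all i, s, a: Q_i(s,a) = w_i(s,a)·Qg(s,a) − b_i(s), with ∑_{i ∈ N} b_i(s)/w_i(s,a) = 0, and the efficiency condition max_{a ∈ A} Qg(s,a) = ∑_{i ∈ N} max_{a ∈ A} Q_i(s,a) holds for every s ∈ S, then Q satisfies the Shapley-Bellman optimality equation: Q_i(s,a) = w_i(s,a)·∑_{s′ ∈ S} P(s′|s,a)·[R(s,a) + γ·∑_{j ∈ N} max_{a′ ∈ A} Q_j(s′,a′)] − b_i(s) for all i, s, a. -/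
/-- Derivation of the Shapley-Bellman optimality equation: if the global
Q-function `Qg` satisfies the Bellman optimality equation, `Q` is related to
`Qg` by the affine projection `Q_i(s,a) = w_i(s,a)·Qg(s,a) − b_i(s)` with
`∑_i b_i(s)/w_i(s,a) = 0`, and the efficiency condition
`max_a Qg(s,a) = ∑_i max_a Q_i(s,a)` holds, then `Q` satisfies the
Shapley-Bellman optimality equation. -/
theorem sb_optimality_of_bellman {N S A : Type*}
    [Fintype N] [Fintype S] [Fintype A] [Nonempty N] [Nonempty S] [Nonempty A]
    (P : S → A → S → ℝ) (R : S → A → ℝ) (γ : ℝ)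
    (w : N → S → A → ℝ) (b : N → S → ℝ)
    (hP0 : ∀ s a s', 0 ≤ P s a s') (hP1 : ∀ s a, ∑ s' : S, P s a s' = 1)
    (hγ0 : 0 < γ) (hγ1 : γ < 1)
    (hw : ∀ i s a, 0 < w i s a) (hb : ∀ i s, 0 ≤ b i s)
    (Qg : S → A → ℝ)
    (hBellman : ∀ (s : S) (a : A),
      Qg s a = ∑ s' : S, P s a s' *
        (R s a + γ * Finset.univ.sup' Finset.univ_nonempty (fun a' => Qg s' a')))
    (Q : N → S → A → ℝ)
    (hproj : ∀ (i : N) (s : S) (a : A), Q i s a = w i s a * Qg s a - b i s)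
    (hzero : ∀ (s : S) (a : A), ∑ i : N, b i s / w i s a = 0)
    (heff : ∀ s : S,
      Finset.univ.sup' Finset.univ_nonempty (fun a : A => Qg s a) =
        ∑ i : N, Finset.univ.sup' Finset.univ_nonempty (fun a : A => Q i s a)) :
    ∀ (i : N) (s : S) (a : A),
      Q i s a = w i s a * ∑ s' : S, P s a s' *
        (R s a + γ * ∑ j : N,
          Finset.univ.sup' Finset.univ_nonempty (fun a' => Q j s' a'))
        - b i s := by
  intro i s a
  rw [hproj i s a, hBellman s a]
  congr 2
  exact Finset.sum_congr rfl fun s' _ => by rw [heff s']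
end
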